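/- Let H be a real Hilbert space, let β > 0, and let {(y_i, u_i)}_{i ∈ J} be a family of pairs in H × H. Then the following are equivalent: (i) there exists a β-cocoercive map G : H → H with G(y_i) = u_i for every i ∈ J; (ii) for all i, j ∈ J, ⟨u_i − u_j, y_i − y_j⟩ ≥ β‖u_i − u_j‖². -/

import Mathlib

open scoped RealInnerProductSpace

set_option linter.unusedSectionVars false

section Auxiliary

open Finset Filter

variable {H : Type*} [NormedAddCommGroup H] [InnerProductSpace ℝ H]

lemma sum_w_norm_sub_sq {α : Type*} (s : Finset α) (w : α → ℝ) (P : α → H) (c : H)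
    (h1 : ∑ y ∈ s, w y = 1) :
    ∑ y ∈ s, w y * ‖P y - c‖ ^ 2 =
      (∑ y ∈ s, w y * ‖P y‖ ^ 2) - 2 * ⟪∑ y ∈ s, w y • P y, c⟫ + ‖c‖ ^ 2 := by
  have expand : ∀ y, ‖P y - c‖ ^ 2 = ‖P y‖ ^ 2 - 2 * ⟪P y, c⟫ + ‖c‖ ^ 2 := by
    intro y
    rw [@norm_sub_sq_real]
  have hinner : ∑ y ∈ s, w y * ⟪P y, c⟫ = ⟪∑ y ∈ s, w y • P y, c⟫ := by
    rw [sum_inner]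
    exact Finset.sum_congr rfl fun y _ => (real_inner_smul_left _ _ _).symm
  calc ∑ y ∈ s, w y * ‖P y - c‖ ^ 2
      = ∑ y ∈ s, (w y * ‖P y‖ ^ 2 - 2 * (w y * ⟪P y, c⟫) + w y * ‖c‖ ^ 2) := by
        refine Finset.sum_congr rfl fun y _ => ?_; rw [expand y]; ring
    _ = (∑ y ∈ s, w y * ‖P y‖ ^ 2) - 2 * (∑ y ∈ s, w y * ⟪P y, c⟫)
          + (∑ y ∈ s, w y) * ‖c‖ ^ 2 := by
        rw [Finset.sum_add_distrib, Finset.sum_sub_distrib, ← Finset.mul_sum,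
          ← Finset.sum_mul]
    _ = _ := by rw [hinner, h1, one_mul]


lemma double_sum_norm_sub_sq {α : Type*} (s : Finset α) (w : α → ℝ) (P : α → H)
    (h1 : ∑ y ∈ s, w y = 1) :
    ∑ y ∈ s, ∑ z ∈ s, w y * w z * ‖P y - P z‖ ^ 2 =
      2 * (∑ y ∈ s, w y * ‖P y‖ ^ 2) - 2 * ‖∑ y ∈ s, w y • P y‖ ^ 2 := by
  set m := ∑ y ∈ s, w y • P y with hm
  set Q := ∑ y ∈ s, w y * ‖P y‖ ^ 2 with hQ
  have inner_m : ∀ y, ∑ z ∈ s, w z * ⟪P y, P z⟫ = ⟪P y, m⟫ := by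
    intro y
    rw [hm, inner_sum]
    exact Finset.sum_congr rfl fun z _ => (real_inner_smul_right _ _ _).symm
  have inner_mm : ∑ y ∈ s, w y * ⟪P y, m⟫ = ‖m‖ ^ 2 := by
    rw [← real_inner_self_eq_norm_sq, hm, sum_inner]
    exact Finset.sum_congr rfl fun y _ => (real_inner_smul_left _ _ _).symm
  have hA : ∑ y ∈ s, ∑ z ∈ s, w y * w z * ‖P y‖ ^ 2 = Q := by
    rw [hQ]
    refine Finset.sum_congr rfl fun y _ => ?_
    calc ∑ z ∈ s, w y * w z * ‖P y‖ ^ 2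
        = (w y * ‖P y‖ ^ 2) * ∑ z ∈ s, w z := by
          rw [Finset.mul_sum]; exact Finset.sum_congr rfl fun z _ => by ring
      _ = w y * ‖P y‖ ^ 2 := by rw [h1, mul_one]
  have hB : ∑ y ∈ s, ∑ z ∈ s, w y * w z * ‖P z‖ ^ 2 = Q := by
    rw [Finset.sum_comm, hQ]
    refine Finset.sum_congr rfl fun z _ => ?_
    calc ∑ y ∈ s, w y * w z * ‖P z‖ ^ 2
        = (w z * ‖P z‖ ^ 2) * ∑ y ∈ s, w y := by
          rw [Finset.mul_sum]; exact Finset.sum_congr rfl fun y _ => by ring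
      _ = w z * ‖P z‖ ^ 2 := by rw [h1, mul_one]
  have hC : ∑ y ∈ s, ∑ z ∈ s, w y * w z * ⟪P y, P z⟫ = ‖m‖ ^ 2 := by
    rw [← inner_mm]
    refine Finset.sum_congr rfl fun y _ => ?_
    rw [← inner_m y, Finset.mul_sum]
    exact Finset.sum_congr rfl fun z _ => by ring
  calc ∑ y ∈ s, ∑ z ∈ s, w y * w z * ‖P y - P z‖ ^ 2
      = ∑ y ∈ s, ∑ z ∈ s, (w y * w z * ‖P y‖ ^ 2 + w y * w z * ‖P z‖ ^ 2
          - 2 * (w y * w z * ⟪P y, P z⟫)) := by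
        refine Finset.sum_congr rfl fun y _ => Finset.sum_congr rfl fun z _ => ?_
        rw [@norm_sub_sq_real]; ring
    _ = 2 * Q - 2 * ‖m‖ ^ 2 := by
        simp only [Finset.sum_add_distrib, Finset.sum_sub_distrib, ← Finset.mul_sum]
        rw [hA, hB, hC]; ring

lemma core_ineq {α : Type*} (s : Finset α) (w : α → ℝ) (A B : α → H) (x : H)
    (hw : ∀ y ∈ s, 0 ≤ w y) (h1 : ∑ y ∈ s, w y = 1)
    (hAB : ∀ y ∈ s, ∀ z ∈ s, ‖B y - B z‖ ≤ ‖A y - A z‖) :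
    ∑ y ∈ s, w y * ‖B y - (∑ z ∈ s, w z • B z)‖ ^ 2 ≤ ∑ y ∈ s, w y * ‖A y - x‖ ^ 2 := by
  set mB := ∑ z ∈ s, w z • B z with hmB
  set mA := ∑ z ∈ s, w z • A z with hmA
  set Qb := ∑ y ∈ s, w y * ‖B y‖ ^ 2 with hQb
  set Qa := ∑ y ∈ s, w y * ‖A y‖ ^ 2 with hQa
  have e1 : ∑ y ∈ s, w y * ‖B y - mB‖ ^ 2 = Qb - ‖mB‖ ^ 2 := by
    rw [sum_w_norm_sub_sq s w B mB h1, ← hmB, real_inner_self_eq_norm_sq]; ring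
  have e2 : ∑ y ∈ s, w y * ‖A y - x‖ ^ 2 = Qa - 2 * ⟪mA, x⟫ + ‖x‖ ^ 2 := by
    rw [sum_w_norm_sub_sq s w A x h1, ← hmA]
  have e3 : 2 * Qb - 2 * ‖mB‖ ^ 2 ≤ 2 * Qa - 2 * ‖mA‖ ^ 2 := by
    rw [← double_sum_norm_sub_sq s w B h1, ← double_sum_norm_sub_sq s w A h1]
    refine Finset.sum_le_sum fun y hy => Finset.sum_le_sum fun z hz => ?_
    have h0 : 0 ≤ w y * w z := mul_nonneg (hw y hy) (hw z hz)
    refine mul_le_mul_of_nonneg_left ?_ h0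
    exact pow_le_pow_left₀ (norm_nonneg _) (hAB y hy z hz) 2
  have e4 : 0 ≤ ‖mA - x‖ ^ 2 := sq_nonneg _
  have e5 : ‖mA - x‖ ^ 2 = ‖mA‖ ^ 2 - 2 * ⟪mA, x⟫ + ‖x‖ ^ 2 := by
    rw [@norm_sub_sq_real]
  rw [e1, e2]
  nlinarith [e3, e4, e5]

lemma kirszbraun_finite {ι : Type*} [Fintype ι] (a b : ι → H)
    (hab : ∀ i j, ‖b i - b j‖ ≤ ‖a i - a j‖) (x : H) :
    ∃ v : H, ∀ i, ‖v - b i‖ ≤ ‖x - a i‖ := by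
  classical
  rcases isEmpty_or_nonempty ι with hι | hι
  · exact ⟨0, fun i => (IsEmpty.false i).elim⟩
  by_cases hx : ∃ i, a i = x
  · obtain ⟨i₀, hi₀⟩ := hx
    refine ⟨b i₀, fun j => ?_⟩
    calc ‖b i₀ - b j‖ ≤ ‖a i₀ - a j‖ := hab i₀ j
      _ = ‖x - a j‖ := by rw [hi₀]
  push_neg at hx
  set r : ι → ℝ := fun i => ‖x - a i‖ with hrdef
  have hr : ∀ i, 0 < r i := fun i => norm_sub_pos_iff.mpr (Ne.symm (hx i))
  set K := convexHull ℝ (Set.range b) with hK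
  have hKcp : IsCompact K := (Set.finite_range b).isCompact_convexHull ℝ
  have hKne : K.Nonempty := ⟨b (Classical.arbitrary ι), subset_convexHull ℝ _ ⟨_, rfl⟩⟩
  have hKcv : Convex ℝ K := convex_convexHull ℝ _
  set g : H → ℝ := fun v => univ.sup' univ_nonempty (fun i => ‖v - b i‖ / r i) with hg
  have hgc : Continuous g := by
    refine Continuous.finset_sup'_apply univ_nonempty fun i _ => ?_
    exact ((continuous_id.sub continuous_const).norm).div_const _
  obtain ⟨v₀, hv₀K, hmin⟩ := hKcp.exists_isMinOn hKne hgc.continuousOn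
  set lam := g v₀ with hlamdef
  have ratio_le : ∀ i, ‖v₀ - b i‖ / r i ≤ lam := fun i =>
    Finset.le_sup' (f := fun i => ‖v₀ - b i‖ / r i) (mem_univ i)
  suffices hlam : lam ≤ 1 by
    refine ⟨v₀, fun i => ?_⟩
    have := (ratio_le i).trans hlam
    exact (div_le_one (hr i)).mp this
  by_contra hlam
  push_neg at hlam
  -- active set
  set I : Finset ι := univ.filter (fun i => ‖v₀ - b i‖ = lam * r i) with hI
  have hIne : I.Nonempty := by
    obtain ⟨i₀, _, hi₀⟩ := Finset.exists_mem_eq_sup' univ_nonempty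
      (fun i => ‖v₀ - b i‖ / r i)
    refine ⟨i₀, Finset.mem_filter.mpr ⟨mem_univ _, ?_⟩⟩
    have h2 : lam = ‖v₀ - b i₀‖ / r i₀ := hi₀
    rw [eq_div_iff (hr i₀).ne'] at h2
    linarith [h2]
  have hIprop : ∀ i ∈ I, ‖v₀ - b i‖ = lam * r i := fun i hi =>
    (Finset.mem_filter.mp hi).2
  have hInact : ∀ i, i ∉ I → ‖v₀ - b i‖ < lam * r i := by
    intro i hi
    have h1 : ‖v₀ - b i‖ ≤ lam * r i := by
      have := ratio_le i
      rw [div_le_iff₀ (hr i)] at this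
      linarith
    have h2 : ‖v₀ - b i‖ ≠ lam * r i := by
      intro h; exact hi (Finset.mem_filter.mpr ⟨mem_univ _, h⟩)
    exact lt_of_le_of_ne h1 h2
  -- v₀ is in the convex hull of the active points
  have hv₀hull : v₀ ∈ convexHull ℝ (↑(I.image b) : Set H) := by
    by_contra hcon
    set C := convexHull ℝ (↑(I.image b) : Set H) with hC
    have hCcp : IsCompact C := (I.image b).finite_toSet.isCompact_convexHull ℝ
    have hCcv : Convex ℝ C := convex_convexHull ℝ _
    have hCne : C.Nonempty := by
      obtain ⟨i, hi⟩ := hIne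
      exact ⟨b i, subset_convexHull ℝ _ (by simp [Finset.mem_image]; exact ⟨i, hi, rfl⟩)⟩
    obtain ⟨p, hpC, hproj⟩ :=
      exists_norm_eq_iInf_of_complete_convex hCne hCcp.isComplete hCcv v₀
    have hvar : ∀ w ∈ C, ⟪v₀ - p, w - p⟫ ≤ 0 :=
      (norm_eq_iInf_iff_real_inner_le_zero hCcv hpC).mp hproj
    have hpne : p ≠ v₀ := fun h => hcon (h ▸ hpC)
    set d := ‖v₀ - p‖ with hd
    have hd0 : 0 < d := norm_sub_pos_iff.mpr (Ne.symm hpne)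
    -- choose step size t
    set τ : ι → ℝ := fun i => if i ∈ I then 1 else (lam * r i - ‖v₀ - b i‖) / (2 * d) with hτ
    have hτpos : ∀ i, 0 < τ i := by
      intro i
      by_cases hi : i ∈ I
      · simp [hτ, hi]
      · simp only [hτ, hi, if_false]
        exact div_pos (by linarith [hInact i hi]) (by linarith)
    set t : ℝ := min 1 (univ.inf' univ_nonempty τ) with ht
    have ht0 : 0 < t := lt_min one_pos ((Finset.lt_inf'_iff _).mpr fun i _ => hτpos i)
    have ht1 : t ≤ 1 := min_le_left _ _
    have htτ : ∀ i, t ≤ τ i := fun i =>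
      le_trans (min_le_right _ _) (Finset.inf'_le _ (mem_univ i))
    set vt := v₀ + t • (p - v₀) with hvt
    have hpK : p ∈ K := by
      refine convexHull_mono ?_ hpC
      intro y hy
      simp only [Finset.coe_image] at hy
      obtain ⟨i, _, rfl⟩ := hy
      exact ⟨i, rfl⟩
    have hvtK : vt ∈ K := hKcv.add_smul_sub_mem hv₀K hpK ⟨le_of_lt ht0, ht1⟩
    have hlt : ∀ i, ‖vt - b i‖ < lam * r i := by
      intro i
      by_cases hi : i ∈ I
      · -- active
        have hbC : b i ∈ C := subset_convexHull ℝ _ (by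
          simp only [Finset.coe_image, Set.mem_image, Finset.mem_coe]; exact ⟨i, hi, rfl⟩)
        have hip : ⟪v₀ - p, b i - p⟫ ≤ 0 := hvar _ hbC
        have key : ⟪v₀ - b i, p - v₀⟫ ≤ -d ^ 2 := by
          have e : (v₀ : H) - b i = (v₀ - p) + (p - b i) := by abel
          rw [e, inner_add_left]
          have e2 : ⟪(v₀ : H) - p, p - v₀⟫ = -d ^ 2 := by
            rw [show (p : H) - v₀ = -(v₀ - p) by abel, inner_neg_right,
              real_inner_self_eq_norm_sq, hd]
          have e3 : ⟪(p : H) - b i, p - v₀⟫ ≤ 0 := by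
            rw [show (p : H) - b i = -(b i - p) by abel,
              show (p : H) - v₀ = -(v₀ - p) by abel, inner_neg_neg, real_inner_comm]
            exact hip
          linarith [e2, e3]
        have expand : ‖vt - b i‖ ^ 2
            = ‖v₀ - b i‖ ^ 2 + 2 * t * ⟪v₀ - b i, p - v₀⟫ + t ^ 2 * d ^ 2 := by
          have e : vt - b i = (v₀ - b i) + t • (p - v₀) := by rw [hvt]; abel
          rw [e, @norm_add_sq_real, real_inner_smul_right, norm_smul]
          have : ‖p - v₀‖ = d := by rw [hd, norm_sub_rev]
          rw [this]
          simp [abs_of_pos ht0]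
          ring
        have hsq : ‖vt - b i‖ ^ 2 < (lam * r i) ^ 2 := by
          have k1 : 2 * t * ⟪v₀ - b i, p - v₀⟫ ≤ 2 * t * (-d ^ 2) :=
            mul_le_mul_of_nonneg_left key (by positivity)
          have k2 : t ^ 2 * d ^ 2 ≤ t * d ^ 2 := by
            nlinarith [mul_nonneg (mul_nonneg ht0.le (sub_nonneg.mpr ht1)) (sq_nonneg d)]
          have h1 : ‖vt - b i‖ ^ 2 ≤ ‖v₀ - b i‖ ^ 2 - t * d ^ 2 := by
            rw [expand]; nlinarith [k1, k2, mul_pos ht0 (pow_pos hd0 2)]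
          have h2 : ‖v₀ - b i‖ = lam * r i := hIprop i hi
          rw [h2] at h1
          linarith [mul_pos ht0 (pow_pos hd0 2)]
        have hpos : 0 ≤ lam * r i := by positivity
        exact lt_of_pow_lt_pow_left₀ 2 hpos hsq
      · -- inactive
        have htri : ‖vt - b i‖ ≤ ‖v₀ - b i‖ + t * d := by
          have e : vt - b i = (v₀ - b i) + t • (p - v₀) := by rw [hvt]; abel
          rw [e]
          refine (norm_add_le _ _).trans ?_
          rw [norm_smul, show ‖p - v₀‖ = d by rw [hd, norm_sub_rev]]
          simp [abs_of_pos ht0]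
        have hslack : t * d ≤ (lam * r i - ‖v₀ - b i‖) / 2 := by
          have h5 := htτ i
          simp only [hτ, hi, if_false] at h5
          have h3 : t * d ≤ (lam * r i - ‖v₀ - b i‖) / (2 * d) * d :=
            mul_le_mul_of_nonneg_right h5 hd0.le
          have h4 : (lam * r i - ‖v₀ - b i‖) / (2 * d) * d
              = (lam * r i - ‖v₀ - b i‖) / 2 := by
            field_simp
          linarith
        have h6 := hInact i hi
        linarith
    have : g vt < lam := by
      rw [hg]
      refine (Finset.sup'_lt_iff _).mpr fun i _ => ?_
      rw [div_lt_iff₀ (hr i)]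
      exact hlt i
    exact absurd (hmin hvtK) (by simpa using not_le.mpr this)
  -- representation as convex combination and final contradiction
  rw [Finset.convexHull_eq] at hv₀hull
  obtain ⟨wts, hw0, hw1, hcm⟩ := hv₀hull
  rw [Finset.centerMass_eq_of_sum_1 _ _ hw1] at hcm
  simp only [id_eq] at hcm
  set s := I.image b with hs
  set ρ : H → ι := fun y => if h : ∃ j ∈ I, b j = y then h.choose else Classical.arbitrary ι
    with hρdef
  have hρ : ∀ y ∈ s, ρ y ∈ I ∧ b (ρ y) = y := by
    intro y hy
    rw [hs, Finset.mem_image] at hy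
    obtain ⟨j, hj, rfl⟩ := hy
    have hex : ∃ j' ∈ I, b j' = b j := ⟨j, hj, rfl⟩
    simp only [hρdef, dif_pos hex]
    exact ⟨hex.choose_spec.1, hex.choose_spec.2⟩
  have hmB : ∑ z ∈ s, wts z • b (ρ z) = v₀ := by
    rw [← hcm]
    exact Finset.sum_congr rfl fun z hz => by rw [(hρ z hz).2]
  have hcore := core_ineq s wts (fun y => a (ρ y)) (fun y => b (ρ y)) x hw0 hw1
    (fun y _ z _ => hab _ _)
  rw [hmB] at hcore
  have hLHS : ∑ y ∈ s, wts y * ‖b (ρ y) - v₀‖ ^ 2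
      = lam ^ 2 * ∑ y ∈ s, wts y * r (ρ y) ^ 2 := by
    rw [Finset.mul_sum]
    refine Finset.sum_congr rfl fun y hy => ?_
    rw [norm_sub_rev, hIprop _ (hρ y hy).1]
    ring
  have hRHS : ∑ y ∈ s, wts y * ‖a (ρ y) - x‖ ^ 2 = ∑ y ∈ s, wts y * r (ρ y) ^ 2 := by
    refine Finset.sum_congr rfl fun y _ => ?_
    rw [hrdef]
    rw [norm_sub_rev]
  rw [hLHS, hRHS] at hcore
  have hSpos : 0 < ∑ y ∈ s, wts y * r (ρ y) ^ 2 := by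
    obtain ⟨y, hy, hwy⟩ : ∃ y ∈ s, (0:ℝ) < wts y := by
      by_contra hc
      push_neg at hc
      have hle : ∑ y ∈ s, wts y ≤ 0 := Finset.sum_nonpos fun y hy => hc y hy
      rw [hw1] at hle; linarith
    have hterm : 0 < wts y * r (ρ y) ^ 2 := mul_pos hwy (pow_pos (hr _) 2)
    refine lt_of_lt_of_le hterm
      (Finset.single_le_sum (f := fun z => wts z * r (ρ z) ^ 2) (fun z hz => ?_) hy)
    exact mul_nonneg (hw0 z hz) (sq_nonneg _)
  have hlamsq : 1 < lam ^ 2 := by nlinarith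
  have := mul_lt_mul_of_pos_right hlamsq hSpos
  rw [one_mul] at this
  linarith [hcore, this]

variable [CompleteSpace H]

set_option maxHeartbeats 1000000 in
lemma balls_inter {ι : Type*} [Nonempty ι] (c : ι → H) (r : ι → ℝ)
    (hfin : ∀ F : Finset ι, ∃ v, ∀ i ∈ F, ‖v - c i‖ ≤ r i) :
    ∃ v, ∀ i, ‖v - c i‖ ≤ r i := by
  classical
  set C : Finset ι → Set H := fun F => {v | ∀ i ∈ F, ‖v - c i‖ ≤ r i} with hCdef
  have hCeq : ∀ F, C F = ⋂ i ∈ F, Metric.closedBall (c i) (r i) := by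
    intro F
    ext v
    simp [hCdef, Metric.mem_closedBall, dist_eq_norm]
  have hCcl : ∀ F, IsClosed (C F) := fun F => by
    rw [hCeq]; exact isClosed_biInter fun i _ => Metric.isClosed_closedBall
  have hCcv : ∀ F, Convex ℝ (C F) := fun F => by
    rw [hCeq]; exact convex_iInter₂ fun i _ => convex_closedBall _ _
  have hCne : ∀ F, (C F).Nonempty := fun F => hfin F
  have hmono : ∀ {F F' : Finset ι}, F ⊆ F' → C F' ⊆ C F :=
    fun {F F'} hFF v hv i hi => hv i (hFF hi)
  -- minimal norm elements
  have hproj : ∀ F : Finset ι, ∃ p ∈ C F, ∀ w ∈ C F, ‖p‖ ≤ ‖w‖ := by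
    intro F
    obtain ⟨p, hpC, hmin⟩ := exists_norm_eq_iInf_of_complete_convex (hCne F)
      ((hCcl F).isComplete) (hCcv F) 0
    refine ⟨p, hpC, fun w hw => ?_⟩
    have h1 : ‖(0:H) - p‖ = ⨅ w : C F, ‖(0:H) - w‖ := hmin
    have : Nonempty (C F) := (hCne F).to_subtype
    have h2 : (⨅ w : C F, ‖(0:H) - w‖) ≤ ‖(0:H) - w‖ := by
      exact ciInf_le ⟨0, Set.forall_mem_range.2 fun _ => norm_nonneg _⟩ (⟨w, hw⟩ : C F)
    rw [← h1] at h2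
    simpa [zero_sub, norm_neg] using h2
  choose p hpmem hpmin using hproj
  -- parallelogram estimate
  have est : ∀ F₀ F F' : Finset ι, F₀ ⊆ F → F₀ ⊆ F' →
      ‖p F - p F'‖ ^ 2 ≤ 2 * ‖p F‖ ^ 2 + 2 * ‖p F'‖ ^ 2 - 4 * ‖p F₀‖ ^ 2 := by
    intro F₀ F F' h1 h2
    set mid := ((1:ℝ)/2) • (p F + p F') with hmid
    have hmidC : mid ∈ C F₀ := by
      have := (hCcv F₀) (hmono h1 (hpmem F)) (hmono h2 (hpmem F'))
        (by norm_num : (0:ℝ) ≤ 1/2) (by norm_num : (0:ℝ) ≤ 1/2) (by norm_num)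
      simpa [hmid, smul_add] using this
    have hle : ‖p F₀‖ ≤ ‖mid‖ := hpmin F₀ mid hmidC
    have hmid4 : ‖p F + p F'‖ ^ 2 = 4 * ‖mid‖ ^ 2 := by
      rw [hmid, norm_smul]
      simp
      ring
    have hpar : ‖p F - p F'‖ ^ 2 = 2 * ‖p F‖ ^ 2 + 2 * ‖p F'‖ ^ 2 - ‖p F + p F'‖ ^ 2 := by
      have e1 : ‖p F + p F'‖ ^ 2 = ‖p F‖ ^ 2 + 2 * ⟪p F, p F'⟫ + ‖p F'‖ ^ 2 :=
        norm_add_sq_real _ _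
      have e2 : ‖p F - p F'‖ ^ 2 = ‖p F‖ ^ 2 - 2 * ⟪p F, p F'⟫ + ‖p F'‖ ^ 2 :=
        norm_sub_sq_real _ _
      linarith
    have hsq : ‖p F₀‖ ^ 2 ≤ ‖mid‖ ^ 2 := by
      nlinarith [norm_nonneg (p F₀), hle]
    nlinarith [hpar, hmid4, hsq]
  -- bound and supremum
  set i₀ : ι := Classical.arbitrary ι with hi₀
  set q : Finset ι → H := fun F => p (insert i₀ F) with hq
  have hbd : ∀ F, ‖q F‖ ≤ ‖c i₀‖ + r i₀ := by
    intro F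
    have h1 : ‖q F - c i₀‖ ≤ r i₀ := (hpmem _) i₀ (Finset.mem_insert_self _ _)
    calc ‖q F‖ = ‖(q F - c i₀) + c i₀‖ := by rw [sub_add_cancel]
      _ ≤ ‖q F - c i₀‖ + ‖c i₀‖ := norm_add_le _ _
      _ ≤ ‖c i₀‖ + r i₀ := by linarith
  set S : Set ℝ := Set.range (fun F => ‖q F‖) with hS
  have hSne : S.Nonempty := ⟨‖q ∅‖, ⟨∅, rfl⟩⟩
  have hSbdd : BddAbove S := ⟨‖c i₀‖ + r i₀, by rintro x ⟨F, rfl⟩; exact hbd F⟩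
  set m : ℝ := sSup S with hm
  have hlem : ∀ F, ‖q F‖ ≤ m := fun F => le_csSup hSbdd ⟨F, rfl⟩
  have hm0 : 0 ≤ m := le_trans (norm_nonneg _) (hlem ∅)
  have happrox : ∀ ε : ℝ, 0 < ε → ∃ F, m - ε < ‖q F‖ := by
    intro ε hε
    obtain ⟨x, ⟨F, rfl⟩, hx⟩ := exists_lt_of_lt_csSup hSne (by linarith : m - ε < m)
    exact ⟨F, hx⟩
  -- the key quantitative estimate
  have key : ∀ (N : ℕ) (F₁ F₂ : Finset ι), (∃ F₀, m - 1/(N+1) < ‖q F₀‖ ∧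
      insert i₀ F₀ ⊆ insert i₀ F₁ ∧ insert i₀ F₀ ⊆ insert i₀ F₂) →
      ‖q F₁ - q F₂‖ ^ 2 ≤ 8 * m * (1/(N+1)) := by
    rintro N F₁ F₂ ⟨F₀, hF₀, h1, h2⟩
    have hε : (0:ℝ) < 1/(N+1) := by positivity
    have e := est (insert i₀ F₀) (insert i₀ F₁) (insert i₀ F₂) h1 h2
    have hb0 : (0:ℝ) ≤ ‖q F₀‖ := norm_nonneg _
    have hb1 : ‖q F₁‖ ≤ m := hlem F₁
    have hb2 : ‖q F₂‖ ≤ m := hlem F₂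
    have hb3 : ‖q F₀‖ ≤ m := hlem F₀
    have hprod : (m - ‖q F₀‖) * (m + ‖q F₀‖) ≤ (1/(N+1)) * (2*m) := by
      refine mul_le_mul (by linarith) (by linarith) (by linarith) (by linarith)
    have hq1 : (0:ℝ) ≤ ‖q F₁‖ := norm_nonneg _
    have hq2 : (0:ℝ) ≤ ‖q F₂‖ := norm_nonneg _
    have sq1 : ‖q F₁‖ ^ 2 ≤ m ^ 2 := by nlinarith
    have sq2 : ‖q F₂‖ ^ 2 ≤ m ^ 2 := by nlinarith
    nlinarith [e, hprod, sq1, sq2]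
  -- build the sequence
  have hseq : ∀ n : ℕ, ∃ F, m - 1/(n+1) < ‖q F‖ := fun n => happrox _ (by positivity)
  choose Fseq hFseq using hseq
  set G : ℕ → Finset ι := fun n => (Finset.range (n+1)).biUnion Fseq with hG
  have hFG : ∀ {N n : ℕ}, N ≤ n → Fseq N ⊆ G n := by
    intro N n hNn
    exact Finset.subset_biUnion_of_mem Fseq (Finset.mem_range.mpr (by omega))
  set u : ℕ → H := fun n => q (G n) with hu
  have hdist : ∀ N n k : ℕ, N ≤ n → N ≤ k →
      dist (u n) (u k) ≤ Real.sqrt (8 * m * (1/(N+1))) := by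
    intro N n k hn hk
    have h := key N (G n) (G k) ⟨Fseq N, hFseq N,
      Finset.insert_subset_insert _ (hFG hn), Finset.insert_subset_insert _ (hFG hk)⟩
    rw [dist_eq_norm]
    have h8 : (0:ℝ) ≤ 8 * m * (1/(N+1)) := by positivity
    rw [show u n - u k = q (G n) - q (G k) from rfl]
    nlinarith [Real.sq_sqrt h8, Real.sqrt_nonneg (8 * m * (1/(N+1))),
      norm_nonneg (q (G n) - q (G k)), h]
  have hb0 : Tendsto (fun N : ℕ => Real.sqrt (8 * m * (1/(N+1)))) atTop (nhds 0) := by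
    have h1 : Tendsto (fun N : ℕ => 8 * m * (1/(N+1) : ℝ)) atTop (nhds 0) := by
      have := tendsto_one_div_add_atTop_nhds_zero_nat (𝕜 := ℝ)
      have h2 := this.const_mul (8*m)
      simpa using h2
    have := (Real.continuous_sqrt.tendsto 0).comp h1
    rw [Real.sqrt_zero] at this; exact this
  have hcauchy : CauchySeq u := cauchySeq_of_le_tendsto_0
    (fun N : ℕ => Real.sqrt (8 * m * (1/(N+1))))
    (fun n k N hn hk => hdist N n k hn hk) hb0
  obtain ⟨v, hv⟩ := cauchySeq_tendsto_of_complete hcauchy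
  refine ⟨v, fun i => ?_⟩
  -- auxiliary sequence including i
  set w : ℕ → H := fun n => q (insert i (G n)) with hw
  have hwu : ∀ n : ℕ, dist (w n) (u n) ≤ Real.sqrt (8 * m * (1/(n+1))) := by
    intro n
    have h := key n (insert i (G n)) (G n) ⟨Fseq n, hFseq n,
      Finset.insert_subset_insert _ ((hFG le_rfl).trans (Finset.subset_insert _ _)),
      Finset.insert_subset_insert _ (hFG le_rfl)⟩
    rw [dist_eq_norm]
    have h8 : (0:ℝ) ≤ 8 * m * (1/(n+1)) := by positivity
    rw [show w n - u n = q (insert i (G n)) - q (G n) from rfl]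
    nlinarith [Real.sq_sqrt h8, Real.sqrt_nonneg (8 * m * (1/(n+1))),
      norm_nonneg (q (insert i (G n)) - q (G n)), h]
  have hwv : Tendsto w atTop (nhds v) := by
    rw [tendsto_iff_dist_tendsto_zero]
    have hub : ∀ n : ℕ, dist (w n) v ≤ Real.sqrt (8 * m * (1/(n+1))) + dist (u n) v := by
      intro n
      calc dist (w n) v ≤ dist (w n) (u n) + dist (u n) v := dist_triangle _ _ _
        _ ≤ _ := by linarith [hwu n]
    have hlim : Tendsto (fun n : ℕ => Real.sqrt (8 * m * (1/(n+1))) + dist (u n) v)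
        atTop (nhds 0) := by
      have h2 : Tendsto (fun n : ℕ => dist (u n) v) atTop (nhds 0) :=
        tendsto_iff_dist_tendsto_zero.mp hv
      have h3 := hb0.add h2
      rw [add_zero] at h3
      exact h3
    exact squeeze_zero (fun n => dist_nonneg) hub hlim
  have hwball : ∀ n, ‖w n - c i‖ ≤ r i := by
    intro n
    exact (hpmem _) i (Finset.mem_insert_of_mem (Finset.mem_insert_self _ _))
  have hlim2 : Tendsto (fun n => ‖w n - c i‖) atTop (nhds ‖v - c i‖) :=
    ((continuous_id.sub continuous_const).norm.tendsto _).comp hwv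
  exact le_of_tendsto hlim2 (Filter.Eventually.of_forall hwball)

/-- Kirszbraun-type extension: any "nonexpansive set" of pairs extends to a global
nonexpansive map. -/
lemma nonexpansive_extension (M₀ : Set (H × H))
    (h₀ : ∀ p ∈ M₀, ∀ q ∈ M₀, ‖p.2 - q.2‖ ≤ ‖p.1 - q.1‖) :
    ∃ T : H → H, (∀ x z : H, ‖T x - T z‖ ≤ ‖x - z‖) ∧ ∀ p ∈ M₀, T p.1 = p.2 := by
  classical
  set S : Set (Set (H × H)) :=
    {M | M₀ ⊆ M ∧ ∀ p ∈ M, ∀ q ∈ M, ‖p.2 - q.2‖ ≤ ‖p.1 - q.1‖} with hS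
  obtain ⟨M, hM₀M, hMmax⟩ := zorn_subset_nonempty S (fun c hcS hchain hcne => by
    refine ⟨⋃₀ c, ⟨?_, ?_⟩, fun s hs => Set.subset_sUnion_of_mem hs⟩
    · obtain ⟨s, hs⟩ := hcne
      exact (hcS hs).1.trans (Set.subset_sUnion_of_mem hs)
    · rintro p hp q hq
      obtain ⟨s, hsc, hps⟩ := hp
      obtain ⟨t, htc, hqt⟩ := hq
      rcases hchain.total hsc htc with hst | hts
      · exact (hcS htc).2 p (hst hps) q hqt
      · exact (hcS hsc).2 p hps q (hts hqt)) M₀ ⟨Set.Subset.rfl, h₀⟩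
  have hMS : M ∈ S := hMmax.prop
  have htotal : ∀ x : H, ∃ v, (x, v) ∈ M := by
    intro x
    by_contra hc
    push_neg at hc
    -- find a compatible value v
    have hex : ∃ v : H, ∀ p ∈ M, ‖v - p.2‖ ≤ ‖x - p.1‖ := by
      rcases Set.eq_empty_or_nonempty M with hMe | hMne
      · exact ⟨0, fun p hp => absurd hp (hMe ▸ Set.notMem_empty p)⟩
      · have : Nonempty M := hMne.to_subtype
        obtain ⟨v, hv⟩ := balls_inter (fun p : M => (p : H × H).2)
          (fun p : M => ‖x - (p : H × H).1‖) (fun F => by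
            obtain ⟨v, hv⟩ := kirszbraun_finite (fun p : F => ((p : M) : H × H).1)
              (fun p : F => ((p : M) : H × H).2)
              (fun p q => hMS.2 _ ((p : M)).2 _ ((q : M)).2) x
            exact ⟨v, fun i hi => hv ⟨i, hi⟩⟩)
        exact ⟨v, fun p hp => hv ⟨p, hp⟩⟩
    obtain ⟨v, hv⟩ := hex
    have hgrow : insert (x, v) M ∈ S := by
      refine ⟨hM₀M.trans (Set.subset_insert _ _), ?_⟩
      rintro p hp q hq
      rcases Set.mem_insert_iff.mp hp with rfl | hpM <;>
        rcases Set.mem_insert_iff.mp hq with h' | hqM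
      · rw [h']; simp
      · exact hv q hqM
      · rw [h']
        rw [norm_sub_rev, norm_sub_rev (p.1) x]
        exact hv p hpM
      · exact hMS.2 p hpM q hqM
    have := hMmax.eq_of_subset hgrow (Set.subset_insert _ _)
    exact hc v (this ▸ Set.mem_insert _ _)
  choose T hT using htotal
  refine ⟨T, fun x z => hMS.2 _ (hT x) _ (hT z), fun p hp => ?_⟩
  have h1 : ((p.1, T p.1) : H × H) ∈ M := hT p.1
  have h2 : p ∈ M := hM₀M hp
  have h3 := hMS.2 _ h1 _ h2
  simp only [sub_self, norm_zero] at h3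
  exact sub_eq_zero.mp (norm_le_zero_iff.mp h3)

end Auxiliary

/-- Interpolation theorem for `β`-cocoercive operators on a real Hilbert space. -/
theorem cocoercive_interpolation
    {H : Type*} [NormedAddCommGroup H] [InnerProductSpace ℝ H] [CompleteSpace H]
    (β : ℝ) (hβ : 0 < β) {J : Type*} (y u : J → H) :
    (∃ G : H → H, (∀ x z : H, β * ‖G x - G z‖ ^ 2 ≤ ⟪G x - G z, x - z⟫) ∧
        ∀ i, G (y i) = u i) ↔
    (∀ i j, β * ‖u i - u j‖ ^ 2 ≤ ⟪u i - u j, y i - y j⟫) := by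
  constructor
  · rintro ⟨G, hG, hGy⟩ i j
    have := hG (y i) (y j)
    rwa [hGy i, hGy j] at this
  · intro hcond
    set M₀ : Set (H × H) := Set.range (fun i => (y i, (2*β) • u i - y i)) with hM₀
    have h₀ : ∀ p ∈ M₀, ∀ q ∈ M₀, ‖p.2 - q.2‖ ≤ ‖p.1 - q.1‖ := by
      rintro p ⟨i, rfl⟩ q ⟨j, rfl⟩
      simp only
      have e : (2*β) • u i - y i - ((2*β) • u j - y j)
          = (2*β) • (u i - u j) - (y i - y j) := by
        rw [smul_sub]; abel
      rw [e]
      have hsq : ‖(2*β) • (u i - u j) - (y i - y j)‖ ^ 2 ≤ ‖y i - y j‖ ^ 2 := by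
        rw [@norm_sub_sq_real, norm_smul, real_inner_smul_left]
        have h1 := hcond i j
        have habs : ‖(2*β : ℝ)‖ = 2*β := by
          rw [Real.norm_eq_abs]; exact abs_of_pos (by linarith)
        rw [habs]
        nlinarith [h1, sq_nonneg ‖u i - u j‖]
      nlinarith [hsq, norm_nonneg ((2*β) • (u i - u j) - (y i - y j)),
        norm_nonneg (y i - y j)]
    obtain ⟨T, hT, hText⟩ := nonexpansive_extension M₀ h₀
    refine ⟨fun x => (1/(2*β)) • (x + T x), fun x z => ?_, fun i => ?_⟩
    · set d := x - z with hd
      set t := T x - T z with ht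
      have hnt : ‖t‖ ≤ ‖d‖ := hT x z
      have hGsub : (1/(2*β)) • (x + T x) - (1/(2*β)) • (z + T z)
          = (1/(2*β)) • (d + t) := by
        rw [← smul_sub]
        congr 1
        rw [hd, ht]; abel
      rw [hGsub, norm_smul, real_inner_smul_left]
      have hc : (0:ℝ) < 1/(2*β) := by positivity
      have habs : ‖(1/(2*β) : ℝ)‖ = 1/(2*β) := by
        rw [Real.norm_eq_abs]; exact abs_of_pos hc
      rw [habs]
      have key : ‖d + t‖ ^ 2 ≤ 2 * ⟪d + t, d⟫ := by
        have e1 : ‖d + t‖ ^ 2 = ‖d‖ ^ 2 + 2 * ⟪d, t⟫ + ‖t‖ ^ 2 := norm_add_sq_real _ _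
        have e2 : ⟪d + t, d⟫ = ‖d‖ ^ 2 + ⟪t, d⟫ := by
          rw [inner_add_left, real_inner_self_eq_norm_sq]
        have e3 : ‖t‖ ^ 2 ≤ ‖d‖ ^ 2 := by nlinarith [hnt, norm_nonneg t, norm_nonneg d]
        have e4 : ⟪d, t⟫ = ⟪t, d⟫ := real_inner_comm _ _
        linarith
      have hβc : β * (1/(2*β)) = 1/2 := by field_simp
      calc β * (1/(2*β) * ‖d + t‖) ^ 2
          = (1/(2*β)) * (β * (1/(2*β)) * ‖d + t‖ ^ 2) := by ring
        _ = (1/(2*β)) * (‖d + t‖ ^ 2 / 2) := by rw [hβc]; ring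
        _ ≤ (1/(2*β)) * ⟪d + t, d⟫ := by
            refine mul_le_mul_of_nonneg_left ?_ hc.le
            linarith [key]
    · have hmem : ((y i, (2*β) • u i - y i) : H × H) ∈ M₀ := ⟨i, rfl⟩
      have hTyi : T (y i) = (2*β) • u i - y i := hText _ hmem
      show (1/(2*β)) • (y i + T (y i)) = u i
      rw [hTyi]
      rw [add_sub_cancel]
      rw [smul_smul]
      rw [show (1/(2*β)) * (2*β) = 1 by field_simp, one_smul]
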